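/- Let t : Fin n → A × B with n ≥ 1 model a bag relation. Then pdep(t) = 1 if and only if t satisfies the FD X→Y. -/
import Mathlib


namespace AFD

open Finset

variable {A B : Type*}

/-- Number of indices with X-value `a`. -/
def c1 {n : ℕ} [DecidableEq A] (t : Fin n → A × B) (a : A) : ℕ :=
  (Finset.univ.filter fun i => (t i).1 = a).card

/-- Number of indices with Y-value `b`. -/
def c2 {n : ℕ} [DecidableEq B] (t : Fin n → A × B) (b : B) : ℕ :=
  (Finset.univ.filter fun i => (t i).2 = b).card

/-- Number of indices with tuple value `(a, b)`. -/
def cnt {n : ℕ} [DecidableEq A] [DecidableEq B] (t : Fin n → A × B) (a : A) (b : B) : ℕ :=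
  (Finset.univ.filter fun i => t i = (a, b)).card

/-- Marginal probability of X-value `a`. -/
noncomputable def p1 {n : ℕ} [DecidableEq A] (t : Fin n → A × B) (a : A) : ℝ :=
  (c1 t a : ℝ) / n

/-- Marginal probability of Y-value `b`. -/
noncomputable def p2 {n : ℕ} [DecidableEq B] (t : Fin n → A × B) (b : B) : ℝ :=
  (c2 t b : ℝ) / n

/-- Joint probability of `(a, b)`. -/
noncomputable def pJ {n : ℕ} [DecidableEq A] [DecidableEq B] (t : Fin n → A × B)
    (a : A) (b : B) : ℝ :=
  (cnt t a b : ℝ) / n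

/-- Conditional probability of Y-value `b` given X-value `a` (with the `0/0 = 0` convention,
which is automatic for real division in Lean). -/
noncomputable def pC {n : ℕ} [DecidableEq A] [DecidableEq B] (t : Fin n → A × B)
    (a : A) (b : B) : ℝ :=
  pJ t a b / p1 t a

/-- The set of distinct X-values. -/
def domX {n : ℕ} [DecidableEq A] (t : Fin n → A × B) : Finset A :=
  Finset.univ.image fun i => (t i).1

/-- The set of distinct Y-values. -/
def domY {n : ℕ} [DecidableEq B] (t : Fin n → A × B) : Finset B :=
  Finset.univ.image fun i => (t i).2

/-- The set of distinct tuples. -/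
def domXY {n : ℕ} [DecidableEq A] [DecidableEq B] (t : Fin n → A × B) : Finset (A × B) :=
  Finset.univ.image t

/-- The probabilistic dependency `pdep(X → Y)`. -/
noncomputable def pdep {n : ℕ} [DecidableEq A] [DecidableEq B] (t : Fin n → A × B) : ℝ :=
  ∑ a ∈ domX t, p1 t a * ∑ b ∈ domY t, (pC t a b) ^ 2

/-- The probabilistic self-dependency `pdep(Y)`. -/
noncomputable def pdepY {n : ℕ} [DecidableEq B] (t : Fin n → A × B) : ℝ :=
  ∑ b ∈ domY t, (p2 t b) ^ 2

/-- The (X;Y)-permutation of `t` induced by the permutation `σ`. -/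
def permRel {n : ℕ} (t : Fin n → A × B) (σ : Equiv.Perm (Fin n)) : Fin n → A × B :=
  fun i => ((t i).1, (t (σ i)).2)

/-- `t` satisfies the functional dependency X → Y. -/
def satFD {n : ℕ} (t : Fin n → A × B) : Prop :=
  ∀ i j, (t i).1 = (t j).1 → (t i).2 = (t j).2


set_option linter.unusedSectionVars false

section Aux
variable {n : ℕ} [DecidableEq A] [DecidableEq B] (t : Fin n → A × B)

lemma sum_c1_eq : ∑ a ∈ domX t, c1 t a = n := by
  have h := Finset.card_eq_sum_card_fiberwise (s := (Finset.univ : Finset (Fin n)))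
    (f := fun i => (t i).1) (t := domX t)
    (fun i _ => Finset.mem_image.2 ⟨i, Finset.mem_univ i, rfl⟩)
  simpa [c1, Finset.card_univ] using h.symm

lemma sum_cnt_eq (a : A) : ∑ b ∈ domY t, cnt t a b = c1 t a := by
  unfold c1 cnt
  rw [Finset.card_eq_sum_card_fiberwise (f := fun i => (t i).2) (t := domY t)
    (fun i _ => Finset.mem_image.2 ⟨i, Finset.mem_univ i, rfl⟩)]
  refine Finset.sum_congr rfl fun b _ => ?_
  rw [Finset.filter_filter]
  congr 1; ext i; simp [Prod.ext_iff]

lemma c1_pos {a : A} (ha : a ∈ domX t) : 0 < c1 t a := by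
  obtain ⟨i, -, hi⟩ := Finset.mem_image.1 ha
  exact Finset.card_pos.2 ⟨i, Finset.mem_filter.2 ⟨Finset.mem_univ i, hi⟩⟩

lemma cnt_le_c1 (a : A) (b : B) : cnt t a b ≤ c1 t a := by
  apply Finset.card_le_card
  intro i hi
  simp only [Finset.mem_filter] at hi ⊢
  exact ⟨hi.1, by rw [hi.2]⟩

lemma pC_eq (hn : 1 ≤ n) {a : A} (ha : a ∈ domX t) (b : B) :
    pC t a b = (cnt t a b : ℝ) / (c1 t a : ℝ) := by
  have hn0 : (n : ℝ) ≠ 0 := by positivity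
  have hc : (c1 t a : ℝ) ≠ 0 := by
    exact_mod_cast Nat.pos_iff_ne_zero.1 (c1_pos t ha)
  unfold pC pJ p1
  field_simp

end Aux

/-- `pdep(t) = 1` if and only if `t` satisfies the FD X→Y. -/
theorem pdep_eq_one_iff_satFD {A B : Type*} [DecidableEq A] [DecidableEq B]
    {n : ℕ} (hn : 1 ≤ n) (t : Fin n → A × B) :
    pdep t = 1 ↔ satFD t := by
  classical
  have hn0 : (0:ℝ) < n := by exact_mod_cast hn
  have hnne : (n:ℝ) ≠ 0 := ne_of_gt hn0
  have hsum_p1 : ∑ a ∈ domX t, p1 t a = 1 := by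
    unfold p1
    rw [← Finset.sum_div, div_eq_one_iff_eq hnne]
    exact_mod_cast sum_c1_eq t
  have hc1pos : ∀ a ∈ domX t, (0:ℝ) < c1 t a := fun a ha => by
    exact_mod_cast c1_pos t ha
  have hsum_pC : ∀ a ∈ domX t, ∑ b ∈ domY t, pC t a b = 1 := by
    intro a ha
    have hc := hc1pos a ha
    calc ∑ b ∈ domY t, pC t a b
        = (∑ b ∈ domY t, (cnt t a b : ℝ)) / c1 t a := by
          rw [Finset.sum_div]
          exact Finset.sum_congr rfl fun b _ => pC_eq t hn ha b
      _ = 1 := by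
          rw [div_eq_one_iff_eq (ne_of_gt hc)]
          exact_mod_cast sum_cnt_eq t a
  have hpC0 : ∀ a b, 0 ≤ pC t a b := fun a b => by
    unfold pC pJ p1; positivity
  have hpC1 : ∀ a ∈ domX t, ∀ b, pC t a b ≤ 1 := by
    intro a ha b
    rw [pC_eq t hn ha b, div_le_one (hc1pos a ha)]
    exact_mod_cast cnt_le_c1 t a b
  have hS_le : ∀ a ∈ domX t, ∑ b ∈ domY t, (pC t a b)^2 ≤ 1 := by
    intro a ha
    rw [← hsum_pC a ha]
    refine Finset.sum_le_sum fun b _ => ?_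
    have h0 := hpC0 a b; have h1 := hpC1 a ha b
    nlinarith
  constructor
  · intro hpdep i j hij
    have h0 : ∑ a ∈ domX t, (p1 t a - p1 t a * ∑ b ∈ domY t, (pC t a b)^2) = 0 := by
      rw [Finset.sum_sub_distrib, hsum_p1]
      have hd : pdep t = ∑ a ∈ domX t, p1 t a * ∑ b ∈ domY t, (pC t a b)^2 := rfl
      rw [← hd, hpdep]; ring
    have hterm : ∀ a ∈ domX t, p1 t a - p1 t a * ∑ b ∈ domY t, (pC t a b)^2 = 0 := by
      refine (Finset.sum_eq_zero_iff_of_nonneg fun a ha => ?_).1 h0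
      have hp1 : 0 ≤ p1 t a := by unfold p1; positivity
      nlinarith [hS_le a ha]
    have hSeq : ∀ a ∈ domX t, ∑ b ∈ domY t, (pC t a b)^2 = 1 := by
      intro a ha
      have hp1pos : 0 < p1 t a := by
        unfold p1; exact div_pos (hc1pos a ha) hn0
      have := hterm a ha
      have : p1 t a * (1 - ∑ b ∈ domY t, (pC t a b)^2) = 0 := by linarith [this]
      rcases mul_eq_zero.1 this with h | h
      · exact absurd h (ne_of_gt hp1pos)
      · linarith
    have hpC01 : ∀ a ∈ domX t, ∀ b ∈ domY t, pC t a b = 0 ∨ pC t a b = 1 := by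
      intro a ha b hb
      have hz : ∑ b ∈ domY t, (pC t a b - (pC t a b)^2) = 0 := by
        rw [Finset.sum_sub_distrib, hsum_pC a ha, hSeq a ha]; ring
      have h1 := (Finset.sum_eq_zero_iff_of_nonneg fun b hb => by
        have h0 := hpC0 a b; have h1 := hpC1 a ha b; nlinarith).1 hz b hb
      have h2 : pC t a b * (1 - pC t a b) = 0 := by nlinarith
      rcases mul_eq_zero.1 h2 with h | h
      · exact Or.inl h
      · exact Or.inr (by linarith)
    -- now deduce the FD
    set a := (t i).1 with hadef
    have ha : a ∈ domX t := Finset.mem_image.2 ⟨i, Finset.mem_univ i, rfl⟩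
    set b := (t i).2 with hbdef
    have hb : b ∈ domY t := Finset.mem_image.2 ⟨i, Finset.mem_univ i, rfl⟩
    have hcntpos : 0 < cnt t a b := by
      refine Finset.card_pos.2 ⟨i, Finset.mem_filter.2 ⟨Finset.mem_univ i, ?_⟩⟩
      exact Prod.ext rfl rfl
    have hpCpos : 0 < pC t a b := by
      rw [pC_eq t hn ha b]
      exact div_pos (by exact_mod_cast hcntpos) (hc1pos a ha)
    have hpC_one : pC t a b = 1 := by
      rcases hpC01 a ha b hb with h | h
      · exact absurd h (ne_of_gt hpCpos)
      · exact h
    have hcnt_eq : cnt t a b = c1 t a := by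
      rw [pC_eq t hn ha b, div_eq_one_iff_eq (ne_of_gt (hc1pos a ha))] at hpC_one
      exact_mod_cast hpC_one
    have hsub : (Finset.univ.filter fun k => t k = (a, b)) ⊆
        (Finset.univ.filter fun k => (t k).1 = a) := by
      intro k hk
      simp only [Finset.mem_filter] at hk ⊢
      exact ⟨hk.1, by rw [hk.2]⟩
    have heq := Finset.eq_of_subset_of_card_le hsub (le_of_eq hcnt_eq.symm)
    have hj : j ∈ (Finset.univ.filter fun k => (t k).1 = a) :=
      Finset.mem_filter.2 ⟨Finset.mem_univ j, hij.symm⟩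
    rw [← heq] at hj
    have := (Finset.mem_filter.1 hj).2
    exact congrArg Prod.snd this.symm
  · intro hFD
    have hinner : ∀ a ∈ domX t, ∑ b ∈ domY t, (pC t a b)^2 = 1 := by
      intro a ha
      obtain ⟨i, -, hi⟩ := Finset.mem_image.1 ha
      have hb0 : (t i).2 ∈ domY t := Finset.mem_image.2 ⟨i, Finset.mem_univ i, rfl⟩
      have hcnt : cnt t a (t i).2 = c1 t a := by
        unfold cnt c1
        congr 1
        ext k
        simp only [Finset.mem_filter, Finset.mem_univ, true_and]
        constructor
        · intro h; rw [h]
        · intro h; exact Prod.ext h (hFD k i (h.trans hi.symm))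
      have hzero : ∀ b ∈ domY t, b ≠ (t i).2 → pC t a b = 0 := by
        intro b _ hbne
        have hz : cnt t a b = 0 := by
          unfold cnt
          rw [Finset.card_eq_zero, Finset.filter_eq_empty_iff]
          intro k _ hk
          apply hbne
          have h1 : (t k).1 = a := by rw [hk]
          have h2 : (t k).2 = (t i).2 := hFD k i (h1.trans hi.symm)
          have h3 : (t k).2 = b := by rw [hk]
          rw [← h3, h2]
        rw [pC_eq t hn ha b, hz]; simp
      rw [Finset.sum_eq_single (t i).2
        (fun b hb hne => by rw [hzero b hb hne]; ring)
        (fun h => absurd hb0 h)]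
      rw [pC_eq t hn ha (t i).2, hcnt, div_self (ne_of_gt (hc1pos a ha))]
      norm_num
    calc pdep t = ∑ a ∈ domX t, p1 t a :=
          Finset.sum_congr rfl fun a ha => by rw [hinner a ha, mul_one]
      _ = 1 := hsum_p1


end AFD
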